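/- Let h > 0 and n ≥ 1, and let A_n(h) be the Wronskian matrix of t^n, ..., t^{2n-1} at t = h. Then A_n(h) is invertible. -/

import Mathlib

open Matrix Polynomial Finset

theorem wronskian_matrix_invertible (n : ℕ) (hn : 1 ≤ n) (h : ℝ) (hh : 0 < h) :
    IsUnit (Matrix.of fun k i : Fin n =>
        (((n + i.1).factorial : ℝ) / ((n + i.1 - k.1).factorial : ℝ)) * h ^ (n + i.1 - k.1)) := by
  set M : Matrix (Fin n) (Fin n) ℝ := Matrix.of fun k i : Fin n =>
      (((n + i.1).factorial : ℝ) / ((n + i.1 - k.1).factorial : ℝ)) * h ^ (n + i.1 - k.1) with hM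
  set v : Fin n → ℝ := fun i => ((n + i.1 : ℕ) : ℝ) with hv
  set L : Matrix (Fin n) (Fin n) ℝ := Matrix.of fun k j : Fin n =>
      (descPochhammer ℝ k.1).coeff j.1 with hL
  set W : Matrix (Fin n) (Fin n) ℝ := (Matrix.vandermonde v)ᵀ with hW
  set D1 : Matrix (Fin n) (Fin n) ℝ := Matrix.diagonal fun k : Fin n => h ^ k.1 with hD1
  set D2 : Matrix (Fin n) (Fin n) ℝ := Matrix.diagonal fun i : Fin n => h ^ (n + i.1) with hD2
  have key : D1 * M = L * W * D2 := by
    ext k i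
    have hkle : k.1 ≤ n + i.1 := le_trans (le_of_lt k.2) (Nat.le_add_right n i.1)
    have hfact : ((n + i.1 - k.1).factorial : ℝ) * ((n + i.1).descFactorial k.1 : ℝ)
        = ((n + i.1).factorial : ℝ) := by
      rw [← Nat.cast_mul, Nat.factorial_mul_descFactorial hkle]
    have hfne : ((n + i.1 - k.1).factorial : ℝ) ≠ 0 := by
      exact_mod_cast (Nat.factorial_pos _).ne'
    have heval : ∑ j : Fin n, (descPochhammer ℝ k.1).coeff j.1 * v i ^ j.1
        = ((n + i.1).descFactorial k.1 : ℝ) := by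
      rw [Fin.sum_univ_eq_sum_range (fun j => (descPochhammer ℝ k.1).coeff j * v i ^ j)]
      rw [← Polynomial.eval_eq_sum_range' (by
        rw [descPochhammer_natDegree]; exact lt_of_lt_of_le k.2 (by omega))]
      rw [hv]
      exact descPochhammer_eval_eq_descFactorial ℝ _ _
    simp only [hD1, hD2, Matrix.mul_apply, Matrix.diagonal_apply, Matrix.of_apply,
      ite_mul, mul_ite, mul_zero, zero_mul, Finset.sum_ite_eq, Finset.sum_ite_eq',
      Finset.mem_univ, if_true, hM, hL, hW,
      Matrix.transpose_apply, Matrix.vandermonde_apply]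
    rw [heval]
    have hpow : h ^ k.1 * h ^ (n + i.1 - k.1) = h ^ (n + i.1) := by
      rw [← pow_add]; congr 1; omega
    field_simp
    have hstep : h ^ k.1 * (((n + i.1).factorial : ℝ) * h ^ (n + i.1 - k.1))
        = ((n + i.1).factorial : ℝ) * h ^ (n + i.1) := by
      rw [← hpow]; ring
    rw [mul_assoc (h ^ k.1), hstep, ← hfact]
  have hdetL : L.det = 1 := by
    have := Matrix.det_matrixOfPolynomials (fun j : Fin n => descPochhammer ℝ j.1)
      (fun j => descPochhammer_natDegree (R := ℝ) j.1) (fun j => monic_descPochhammer ℝ j.1)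
    rw [hL, ← Matrix.det_transpose]
    convert this using 2
    ext a b; rfl
  have hdetW : W.det ≠ 0 := by
    rw [hW, Matrix.det_transpose, Matrix.det_vandermonde]
    refine Finset.prod_ne_zero_iff.mpr fun i _ => Finset.prod_ne_zero_iff.mpr fun j hj => ?_
    have hij : i.1 < j.1 := Fin.lt_def.mp (Finset.mem_Ioi.mp hj)
    have : v i < v j := by
      simp only [hv]
      exact_mod_cast (by omega : n + i.1 < n + j.1)
    exact sub_ne_zero_of_ne this.ne'
  have hdetD1 : D1.det ≠ 0 := by
    rw [hD1, Matrix.det_diagonal]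
    exact Finset.prod_ne_zero_iff.mpr fun k _ => pow_ne_zero _ hh.ne'
  have hdetD2 : D2.det ≠ 0 := by
    rw [hD2, Matrix.det_diagonal]
    exact Finset.prod_ne_zero_iff.mpr fun k _ => pow_ne_zero _ hh.ne'
  have hdet : M.det ≠ 0 := by
    have := congrArg Matrix.det key
    rw [Matrix.det_mul, Matrix.det_mul, Matrix.det_mul, hdetL, one_mul] at this
    intro h0
    rw [h0, mul_zero] at this
    exact (mul_ne_zero hdetW hdetD2) this.symm
  rw [hM] at hdet ⊢
  exact (Matrix.isUnit_iff_isUnit_det _).mpr (isUnit_iff_ne_zero.mpr hdet)
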